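/- Suppose a set $X$ of six vertices of the hypercube graph $Q_3$ is organised into three unordered pairs $\{s_1,t_1\}, \{s_2,t_2\}, \{s_3,t_3\}$. Then there exist two of the pairs, say $\{s_i,t_i\}$ and $\{s_j,t_j\}$ with $i \ne j$, such that the four vertices $s_i, s_j, t_i, t_j$ do not appear in this cyclic order on a $4$-cycle of $Q_3$ bounding a $2$-face of the $3$-cube. -/

import Mathlib

open SimpleGraph

/-- The hypercube graph `Q d` on `{0,1}^d`: two vertices are adjacent iff they differ in
exactly one coordinate. -/
def Q (d : ℕ) : SimpleGraph (Fin d → Bool) where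
  Adj x y := hammingDist x y = 1
  symm := ⟨fun x y h => by simpa [hammingDist_comm] using h⟩
  loopless := ⟨fun x h => by simp [hammingDist_self] at h⟩

/-- The four vertices `a b c d` appear in this cyclic order on the `4`-cycle bounding a
`2`-face of the `3`-cube: they all lie in a common `2`-face (some coordinate is constant)
and consecutive ones are adjacent around the cycle. -/
def CyclicOnSquare (a b c d : Fin 3 → Bool) : Prop :=
  ∃ (i : Fin 3) (ε : Bool), a i = ε ∧ b i = ε ∧ c i = ε ∧ d i = ε ∧
    (Q 3).Adj a b ∧ (Q 3).Adj b c ∧ (Q 3).Adj c d ∧ (Q 3).Adj d a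

lemma key : ∀ x y u v w : Fin 3 → Bool, x ≠ y → hammingDist u x = 1 → hammingDist u y = 1 →
    hammingDist v x = 1 → hammingDist v y = 1 → hammingDist w x = 1 → hammingDist w y = 1 →
    u = v ∨ u = w ∨ v = w := by decide

theorem stmt_9 (s t : Fin 3 → Fin 3 → Bool)
    (hinj : Function.Injective (Sum.elim s t)) :
    ∃ i j, i ≠ j ∧ ¬ CyclicOnSquare (s i) (s j) (t i) (t j) := by
  by_contra h
  push_neg at h
  have hst : ∀ i j : Fin 3, s i ≠ t j := by
    intro i j hij
    have := hinj (a₁ := Sum.inl i) (a₂ := Sum.inr j) (by simpa using hij)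
    simp at this
  have hss : ∀ i j : Fin 3, s i = s j → i = j := by
    intro i j hij
    have := hinj (a₁ := Sum.inl i) (a₂ := Sum.inl j) (by simpa using hij)
    simpa using this
  obtain ⟨_, _, -, -, -, -, h1, h2, h3, h4⟩ := h 0 1 (by decide)
  obtain ⟨_, _, -, -, -, -, g1, g2, g3, g4⟩ := h 0 2 (by decide)
  -- s 1, t 1, s 2 are three common neighbors of s 0 and t 0
  have hxy : s 0 ≠ t 0 := hst 0 0
  have := key (s 0) (t 0) (s 1) (t 1) (s 2) hxy
    (by simpa [Q, hammingDist_comm] using h1) (by simpa [Q, hammingDist_comm] using h2)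
    (by simpa [Q, hammingDist_comm] using h4) (by simpa [Q, hammingDist_comm] using h3)
    (by simpa [Q, hammingDist_comm] using g1) (by simpa [Q, hammingDist_comm] using g2)
  rcases this with h' | h' | h'
  · exact hst 1 1 h'
  · exact absurd (hss 1 2 h') (by decide)
  · exact hst 2 1 h'.symm
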